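/- (Lemma 6 on the Toda lattice: gauge equivalence of the Kelvin-transformed and n-reflected Lax pairs.) Let a > 0 and let u(n,r,θ) be smooth in (r,θ) for each n ∈ ℤ (no boundary condition is assumed). If φ₃ : ℤ × ℝ → ℂ (differentiable in θ) satisfies equation (V3), then the function φ₄(n,θ) = e^{2inθ + u(n,a,θ)}·φ₃(n,θ) satisfies equation (V4). -/

import Mathlib

/-- The radial partial derivative `u_r(n, a, θ)`. -/
noncomputable def uR (u : ℤ → ℝ → ℝ → ℂ) (a : ℝ) (n : ℤ) (θ : ℝ) : ℂ :=
  deriv (fun r : ℝ => u n r θ) a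

/-- The angular partial derivative `u_θ(n, a, θ)`. -/
noncomputable def uT (u : ℤ → ℝ → ℝ → ℂ) (a : ℝ) (n : ℤ) (θ : ℝ) : ℂ :=
  deriv (fun t : ℝ => u n a t) θ

/-- `ω(n, a, θ) = exp(u(n,a,θ) − u(n+1,a,θ))`. -/
noncomputable def om (u : ℤ → ℝ → ℝ → ℂ) (a : ℝ) (n : ℤ) (θ : ℝ) : ℂ :=
  Complex.exp (u n a θ - u (n + 1) a θ)

/-- `u(n,·,·)` is smooth in `(r,θ)` on `{r > 0}` for every `n`. -/
def SmoothOnHalf (u : ℤ → ℝ → ℝ → ℂ) : Prop :=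
  ∀ n : ℤ, ContDiffOn ℝ (⊤ : ℕ∞) (fun p : ℝ × ℝ => u n p.1 p.2) {p : ℝ × ℝ | 0 < p.1}

/-- Equation (V1): the θ-part, restricted to `r = a`, of the original Lax pair of the
polar two-dimensional Toda lattice. -/
def V1 (a : ℝ) (u : ℤ → ℝ → ℝ → ℂ) (φ : ℤ → ℝ → ℂ) : Prop :=
  ∀ (n : ℤ) (θ : ℝ), HasDerivAt (φ n)
    (Complex.I * a * Complex.exp (Complex.I * θ) / 2 * φ (n + 1) θ
      - Complex.I * a / 2 * (uR u a n θ - Complex.I / a * uT u a n θ) * φ n θ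
      + Complex.I * a * Complex.exp (-(Complex.I * θ)) / 2 * om u a (n - 1) θ * φ (n - 1) θ) θ

/-- Equation (V2): the θ-part, restricted to `r = a`, of the Lax pair obtained from the
reflection `θ → −θ`. -/
def V2 (a : ℝ) (u : ℤ → ℝ → ℝ → ℂ) (φ : ℤ → ℝ → ℂ) : Prop :=
  ∀ (n : ℤ) (θ : ℝ), HasDerivAt (φ n)
    (Complex.I * a * Complex.exp (-(Complex.I * θ)) / 2 * φ (n + 1) θ
      - Complex.I * a / 2 * (uR u a n θ + Complex.I / a * uT u a n θ) * φ n θ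
      + Complex.I * a * Complex.exp (Complex.I * θ) / 2 * om u a (n - 1) θ * φ (n - 1) θ) θ

/-- Equation (V3): the θ-part, restricted to `r = a`, of the Lax pair obtained from the
Kelvin transformation. -/
def V3 (a : ℝ) (u : ℤ → ℝ → ℝ → ℂ) (φ : ℤ → ℝ → ℂ) : Prop :=
  ∀ (n : ℤ) (θ : ℝ), HasDerivAt (φ n)
    (Complex.I * a * Complex.exp (Complex.I * θ) / 2 * φ (n + 1) θ
      - Complex.I * a / 2 * (-uR u a n θ + 4 * n / a - Complex.I / a * uT u a n θ) * φ n θ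
      + Complex.I * a * Complex.exp (-(Complex.I * θ)) / 2 * om u a (n - 1) θ * φ (n - 1) θ) θ

/-- Equation (V4): the θ-part, restricted to `r = a`, of the Lax pair obtained from the
reflection `ũ(n) = −u(−n)`. -/
def V4 (a : ℝ) (u : ℤ → ℝ → ℝ → ℂ) (φ : ℤ → ℝ → ℂ) : Prop :=
  ∀ (n : ℤ) (θ : ℝ), HasDerivAt (φ n)
    (Complex.I * a * Complex.exp (Complex.I * θ) / 2 * φ (n - 1) θ
      - Complex.I * a / 2 * (-uR u a n θ + Complex.I / a * uT u a n θ) * φ n θ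
      + Complex.I * a * Complex.exp (-(Complex.I * θ)) / 2 * om u a n θ * φ (n + 1) θ) θ

/-- Lemma 6 on the Toda lattice: gauge equivalence of the Kelvin-transformed and
n-reflected Lax pairs. Without any boundary condition, if `φ₃` solves (V3) then
`φ₄(n,θ) = e^{2inθ + u(n,a,θ)} φ₃(n,θ)` solves (V4). -/
theorem toda_lemma6 (a : ℝ) (ha : 0 < a) (u : ℤ → ℝ → ℝ → ℂ) (hu : SmoothOnHalf u)
    (φ₃ : ℤ → ℝ → ℂ) (hφ₃ : V3 a u φ₃) :
    V4 a u (fun n θ => Complex.exp (2 * Complex.I * n * θ + u n a θ) * φ₃ n θ) := by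
  intro n θ
  have hopen : IsOpen {p : ℝ × ℝ | 0 < p.1} := isOpen_lt continuous_const continuous_fst
  have hut : HasDerivAt (fun t : ℝ => u n a t) (uT u a n θ) θ := by
    have hca : ContDiffAt ℝ (⊤ : ℕ∞) (fun p : ℝ × ℝ => u n p.1 p.2) (a, θ) :=
      (hu n).contDiffAt (hopen.mem_nhds (by exact ha))
    have hd : DifferentiableAt ℝ (fun p : ℝ × ℝ => u n p.1 p.2) (a, θ) :=
      hca.differentiableAt (by simp)
    have hpair : DifferentiableAt ℝ (fun t : ℝ => ((a, t) : ℝ × ℝ)) θ :=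
      (differentiableAt_const a).prodMk differentiableAt_id
    exact (hd.comp θ hpair).hasDerivAt
  have hlin : HasDerivAt (fun t : ℝ => 2 * Complex.I * (n : ℂ) * (t : ℂ))
      (2 * Complex.I * (n : ℂ)) θ := by
    simpa using (Complex.ofRealCLM.hasDerivAt (x := θ)).const_mul (2 * Complex.I * (n : ℂ))
  have hψ := ((hlin.add hut).cexp).mul (hφ₃ n θ)
  simp only [Pi.add_apply] at hψ
  refine hψ.congr_deriv (Eq.symm ?_)
  have ha' : ((a : ℂ)) ≠ 0 := Complex.ofReal_ne_zero.mpr ha.ne'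
  have hEm : Complex.exp (2 * Complex.I * ((n - 1 : ℤ) : ℂ) * θ + u (n - 1) a θ)
      = Complex.exp (2 * Complex.I * (n : ℂ) * θ + u n a θ)
        * Complex.exp (-(Complex.I * θ)) ^ 2 * om u a (n - 1) θ := by
    simp only [om, sq, ← Complex.exp_add]
    congr 1
    simp only [sub_add_cancel]
    push_cast
    ring
  have hEp : om u a n θ * Complex.exp (2 * Complex.I * ((n + 1 : ℤ) : ℂ) * θ + u (n + 1) a θ)
      = Complex.exp (2 * Complex.I * (n : ℂ) * θ + u n a θ)
        * Complex.exp (Complex.I * θ) ^ 2 := by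
    simp only [om, sq, ← Complex.exp_add]
    congr 1
    push_cast
    ring
  have hPQ : Complex.exp (Complex.I * (θ : ℂ)) * Complex.exp (-(Complex.I * θ)) = 1 := by
    rw [← Complex.exp_add]
    simp
  linear_combination (norm := (field_simp; ring_nf; simp only [Complex.I_sq]; ring_nf))
    ((Complex.I * (a : ℂ) * Complex.exp (Complex.I * θ) / 2 * φ₃ (n - 1) θ : ℂ)) * hEm
    + ((Complex.I * (a : ℂ) * Complex.exp (-(Complex.I * θ)) / 2 * φ₃ (n + 1) θ : ℂ)) * hEp
    + ((Complex.I * (a : ℂ) * Complex.exp (-(Complex.I * θ))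
        * Complex.exp (2 * Complex.I * (n : ℂ) * θ + u n a θ) * om u a (n - 1) θ
        * φ₃ (n - 1) θ / 2
      + Complex.I * (a : ℂ) * Complex.exp (Complex.I * θ)
        * Complex.exp (2 * Complex.I * (n : ℂ) * θ + u n a θ) * φ₃ (n + 1) θ / 2 : ℂ)) * hPQ
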